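/- Let D be a demand multigraph on n vertices (24 ≤ n) with Δ(D) ≤ 2⌊n/6⌋ - 4 and D not (2⌊n/6⌋-4)-regular. Then by repeatedly lifting edges, D can be transformed into a (2⌊n/6⌋-4)-regular demand multigraph D' on the same vertex set such that any resolution of D' in Kₙ yields a resolution of D, possibly after adding parallel edges to D. -/

import Mathlib

/-- Degree of `v` in a multigraph given as a list of (non-loop) edges, counted with multiplicity. -/
def mdeg {V : Type*} [DecidableEq V] (D : List (V × V)) (v : V) : ℕ :=
  (D.filter (fun p => p.1 = v ∨ p.2 = v)).length

/-- A demand multigraph can be resolved in the complete graph: there is an assignment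
of a path in `K_V` to each demand edge, connecting its endpoints, such that the paths
are pairwise edge-disjoint. -/
def Resolvable {V : Type*} (D : List (V × V)) : Prop :=
  ∃ P : (i : Fin D.length) → (⊤ : SimpleGraph V).Walk (D.get i).1 (D.get i).2,
    (∀ i, (P i).IsPath) ∧
    ∀ i j, i ≠ j → ∀ e ∈ (P i).edges, e ∉ (P j).edges

/-- A single lifting step: an edge `p` of `D` is replaced by the path through a third
vertex `w`. -/
def Lift {V : Type*} [DecidableEq V] (D D' : List (V × V)) : Prop :=
  ∃ p ∈ D, ∃ w : V, w ≠ p.1 ∧ w ≠ p.2 ∧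
    D' = (p.1, w) :: (w, p.2) :: D.erase p

lemma List.getElem_cons_ne_zero {α : Type*} (a : α) (l : List α) (n : ℕ) (hn : n ≠ 0)
    (h : n < (a :: l).length) : (a :: l)[n] = l[n - 1]'(by simp at h; omega) := by
  obtain ⟨m, rfl⟩ : ∃ m, n = m + 1 := ⟨n - 1, by omega⟩
  simp

lemma mdeg_nil {V : Type*} [DecidableEq V] (v : V) : mdeg ([] : List (V × V)) v = 0 := rfl

lemma mdeg_cons {V : Type*} [DecidableEq V] (q : V × V) (L : List (V × V)) (v : V) :
    mdeg (q :: L) v = (if q.1 = v ∨ q.2 = v then 1 else 0) + mdeg L v := by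
  simp only [mdeg, List.filter_cons]
  split <;> simp_all <;> omega

lemma mdeg_append {V : Type*} [DecidableEq V] (L M : List (V × V)) (v : V) :
    mdeg (L ++ M) v = mdeg L v + mdeg M v := by
  simp [mdeg, List.filter_append]

lemma mdeg_single (u w v : V') [DecidableEq V'] :
    mdeg [(u, w)] v = if u = v ∨ w = v then 1 else 0 := by
  simp [mdeg, List.filter]; split <;> simp_all

lemma sum_mdeg {V : Type*} [DecidableEq V] [Fintype V] (L : List (V × V)) (hloop : ∀ p ∈ L, p.1 ≠ p.2) :
    ∑ v, mdeg L v = 2 * L.length := by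
  induction L with
  | nil => simp [mdeg_nil]
  | cons q L ih =>
    have hq : q.1 ≠ q.2 := hloop q List.mem_cons_self
    have ih' := ih (fun p hp => hloop p (List.mem_cons_of_mem q hp))
    simp only [mdeg_cons, Finset.sum_add_distrib, ih', List.length_cons]
    have : ∑ v, (if q.1 = v ∨ q.2 = v then 1 else 0) = 2 := by
      rw [Finset.sum_ite, Finset.sum_const, Finset.sum_const]
      have : Finset.univ.filter (fun v => q.1 = v ∨ q.2 = v) = {q.1, q.2} := by
        ext x; simp [eq_comm, or_comm]
      simp [this, Finset.card_insert_of_notMem, hq]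
    omega

lemma resolvable_of_inj {V : Type*} (L₁ L₂ : List (V × V)) (f : Fin L₁.length → Fin L₂.length)
    (hinj : Function.Injective f) (hget : ∀ i, L₂.get (f i) = L₁.get i) :
    Resolvable L₂ → Resolvable L₁ := by
  rintro ⟨P, hpath, hdisj⟩
  refine ⟨fun i => (P (f i)).copy (congrArg Prod.fst (hget i)) (congrArg Prod.snd (hget i)),
    fun i => by simpa using hpath (f i), ?_⟩
  intro i j hij e he
  rw [SimpleGraph.Walk.edges_copy] at he ⊢
  exact hdisj _ _ (fun h => hij (hinj h)) e he

lemma resolvable_unlift {V : Type*} [DecidableEq V] (a w b : V) (M : List (V × V)) :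
    Resolvable ((a, w) :: (w, b) :: M) → Resolvable ((a, b) :: M) := by
  rintro ⟨P, hpath, hdisj⟩
  have h0 : (0 : ℕ) < M.length + 2 := by omega
  have h1 : (1 : ℕ) < M.length + 2 := by omega
  set p0 : (⊤ : SimpleGraph V).Walk a w := P ⟨0, h0⟩ with hp0
  set p1 : (⊤ : SimpleGraph V).Walk w b := P ⟨1, h1⟩ with hp1
  have key : ∀ (j' : Fin M.length), ∀ e' ∈ ((p0.append p1).bypass).edges,
      e' ∉ (P j'.succ.succ).edges := by
    intro j' e' he'
    have := SimpleGraph.Walk.edges_bypass_subset _ he'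
    rw [SimpleGraph.Walk.edges_append, List.mem_append] at this
    rcases this with h | h
    · exact hdisj ⟨0, h0⟩ j'.succ.succ (by simp [Fin.ext_iff]) e' h
    · exact hdisj ⟨1, h1⟩ j'.succ.succ (by simp [Fin.ext_iff]) e' h
  refine ⟨fun i => Fin.cases ((p0.append p1).bypass) (fun j => P j.succ.succ) i, ?_, ?_⟩
  · intro i
    refine Fin.cases ?_ (fun j => ?_) i
    · exact SimpleGraph.Walk.bypass_isPath _
    · exact hpath _
  · intro i j hij e he
    rcases Fin.eq_zero_or_eq_succ i with rfl | ⟨i', rfl⟩ <;>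
      rcases Fin.eq_zero_or_eq_succ j with rfl | ⟨j', rfl⟩
    · exact absurd rfl hij
    · simp only [Fin.cases_zero] at he
      exact key j' e he
    · simp only [Fin.cases_succ] at he
      simp only [Fin.cases_zero]
      intro hb
      exact key i' e hb he
    · simp only [Fin.cases_succ] at he ⊢
      refine hdisj i'.succ.succ j'.succ.succ ?_ e he
      simp only [ne_eq, Fin.ext_iff, Fin.val_succ] at hij ⊢
      omega

lemma resolvable_insert_middle {V : Type*} (q : V × V) (l₁ l₂ : List (V × V)) :
    Resolvable (q :: (l₁ ++ l₂)) → Resolvable (l₁ ++ q :: l₂) := by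
  have hlen1 : (l₁ ++ q :: l₂).length = l₁.length + l₂.length + 1 := by simp; omega
  have hlen2 : (q :: (l₁ ++ l₂)).length = l₁.length + l₂.length + 1 := by simp [Nat.add_comm]
  refine resolvable_of_inj _ _ (fun i =>
    if h : i.val < l₁.length then ⟨i.val + 1, by omega⟩
    else if h2 : i.val = l₁.length then ⟨0, by omega⟩
    else ⟨i.val, by have := i.isLt; omega⟩) ?_ ?_
  · intro i j h
    apply Fin.ext
    dsimp only at h
    split_ifs at h <;> simp_all [Fin.ext_iff] <;> omega
  · intro i
    have hi := i.isLt
    rw [List.get_eq_getElem, List.get_eq_getElem]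
    split_ifs with h h2
    · show (q :: (l₁ ++ l₂))[i.val + 1] = _
      rw [List.getElem_cons_succ, List.getElem_append_left h,
        List.getElem_append_left h]
    · show (q :: (l₁ ++ l₂))[0] = _
      rw [List.getElem_cons_zero, List.getElem_append_right (le_of_eq h2.symm)]
      simp [h2]
    · show (q :: (l₁ ++ l₂))[i.val] = _
      rw [List.getElem_cons_ne_zero _ _ _ (by omega),
        List.getElem_append_right (by omega : l₁.length ≤ i.val - 1),
        List.getElem_append_right (by omega : l₁.length ≤ i.val),
        List.getElem_cons_ne_zero _ _ _ (by omega)]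
      congr 1; omega

lemma resolvable_prefix {V : Type*} (D F : List (V × V)) :
    Resolvable (D ++ F) → Resolvable D := by
  refine resolvable_of_inj D (D ++ F) (fun i => ⟨i.val, by simp; omega⟩) ?_ ?_
  · intro i j h
    simpa [Fin.ext_iff] using h
  · intro i
    rw [List.get_eq_getElem, List.get_eq_getElem]
    exact List.getElem_append_left i.isLt

lemma fix_parity {V : Type*} [Fintype V] [DecidableEq V] (k : ℕ) (hk : Even k) :
    ∀ N : ℕ, ∀ L : List (V × V),
    (Finset.univ.filter (fun v => Odd (mdeg L v))).card ≤ N →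
    (∀ p ∈ L, p.1 ≠ p.2) → (∀ v, mdeg L v ≤ k) →
    ∃ F : List (V × V), (∀ p ∈ L ++ F, p.1 ≠ p.2) ∧ (∀ v, mdeg (L ++ F) v ≤ k) ∧
      (∀ v, Even (mdeg (L ++ F) v)) := by
  intro N
  induction N with
  | zero =>
    intro L hN hloop hle
    refine ⟨[], by simpa using hloop, by simpa using hle, fun v => ?_⟩
    simp only [List.append_nil]
    by_contra hodd
    have : v ∈ Finset.univ.filter (fun v => Odd (mdeg L v)) := by
      simp [Nat.not_even_iff_odd.mp hodd]
    have := Finset.card_pos.mpr ⟨v, this⟩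
    omega
  | succ N ih =>
    intro L hN hloop hle
    set S := Finset.univ.filter (fun v => Odd (mdeg L v)) with hS
    by_cases hall : ∀ v, Even (mdeg L v)
    · exact ⟨[], by simpa using hloop, by simpa using hle, by simpa using hall⟩
    have hScard : Even S.card := by
      have := (Finset.even_sum_iff_even_card_odd (fun v => mdeg L v)).mp
        (by rw [sum_mdeg L hloop]; exact even_two_mul _)
      simpa [hS] using this
    have hSpos : 0 < S.card := by
      push_neg at hall
      obtain ⟨v, hv⟩ := hall
      exact Finset.card_pos.mpr ⟨v, by simp [hS, Nat.not_even_iff_odd.mp hv]⟩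
    have h2 : 1 < S.card := by rcases hScard with ⟨c, hc⟩; omega
    obtain ⟨u, hu, w, hw, huw⟩ := Finset.one_lt_card.mp h2
    simp only [hS, Finset.mem_filter] at hu hw
    have hou : Odd (mdeg L u) := hu.2
    have how : Odd (mdeg L w) := hw.2
    set L₁ := L ++ [(u, w)] with hL₁
    have hmd : ∀ v, mdeg L₁ v = mdeg L v + if u = v ∨ w = v then 1 else 0 := by
      intro v; rw [hL₁, mdeg_append, mdeg_single]
    have hloop₁ : ∀ p ∈ L₁, p.1 ≠ p.2 := by
      intro p hp
      rcases List.mem_append.mp hp with h | h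
      · exact hloop p h
      · simp at h; subst h; exact huw
    have hle₁ : ∀ v, mdeg L₁ v ≤ k := by
      intro v
      rw [hmd v]
      split
      · rename_i h
        rcases hk with ⟨a, ha⟩
        rcases h with h | h
        · have h' : mdeg L v = mdeg L u := by rw [h]
          rcases hou with ⟨c, hc⟩
          have := hle v; omega
        · have h' : mdeg L v = mdeg L w := by rw [h]
          rcases how with ⟨c, hc⟩
          have := hle v; omega
      · simpa using hle v
    have hsub : Finset.univ.filter (fun v => Odd (mdeg L₁ v)) ⊆ S \ {u, w} := by
      intro v hv
      simp only [Finset.mem_filter, Finset.mem_univ, true_and] at hv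
      rw [hmd v] at hv
      have hvu : v ≠ u := by
        rintro rfl
        rw [if_pos (Or.inl rfl)] at hv
        rcases hou with ⟨c, hc⟩; rcases hv with ⟨d, hd⟩; omega
      have hvw : v ≠ w := by
        rintro rfl
        rw [if_pos (Or.inr rfl)] at hv
        rcases how with ⟨c, hc⟩; rcases hv with ⟨d, hd⟩; omega
      rw [if_neg (by tauto), Nat.add_zero] at hv
      simp [hS, Finset.mem_sdiff, hv, hvu, hvw]
    have hcard₁ : (Finset.univ.filter (fun v => Odd (mdeg L₁ v))).card ≤ N := by
      have h1 := Finset.card_le_card hsub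
      have h2' : ({u, w} : Finset V) ⊆ S := by
        intro x hx; simp at hx; rcases hx with rfl | rfl
        · exact Finset.mem_filter.mpr ⟨Finset.mem_univ _, hou⟩
        · exact Finset.mem_filter.mpr ⟨Finset.mem_univ _, how⟩
      have h3 := Finset.card_sdiff_of_subset h2'
      have h4 : ({u, w} : Finset V).card = 2 := Finset.card_pair huw
      omega
    obtain ⟨F', h1, h2, h3⟩ := ih L₁ hcard₁ hloop₁ hle₁
    refine ⟨(u, w) :: F', ?_, ?_, ?_⟩ <;>
      · have : L ++ (u, w) :: F' = L₁ ++ F' := by simp [hL₁]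
        rw [this]; assumption

lemma pad_edges {V : Type*} [Fintype V] [DecidableEq V] (k : ℕ) (hk : Even k)
    (hk0 : 0 < k) (hcard : 4 ≤ Fintype.card V) :
    ∀ N : ℕ, ∀ L : List (V × V), 2 * k + 2 - 2 * L.length ≤ N →
    (∀ p ∈ L, p.1 ≠ p.2) → (∀ v, mdeg L v ≤ k) → (∀ v, Even (mdeg L v)) →
    ∃ F : List (V × V), (∀ p ∈ L ++ F, p.1 ≠ p.2) ∧ (∀ v, mdeg (L ++ F) v ≤ k) ∧
      (∀ v, Even (mdeg (L ++ F) v)) ∧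
      (k < (L ++ F).length ∨ ∀ v, mdeg (L ++ F) v = k) := by
  intro N
  induction N with
  | zero =>
    intro L hN hloop hle heven
    exact ⟨[], by simpa using hloop, by simpa using hle, by simpa using heven,
      Or.inl (by simp; omega)⟩
  | succ N ih =>
    intro L hN hloop hle heven
    by_cases hbig : k < L.length
    · exact ⟨[], by simpa using hloop, by simpa using hle, by simpa using heven,
        Or.inl (by simpa using hbig)⟩
    by_cases hreg : ∀ v, mdeg L v = k
    · exact ⟨[], by simpa using hloop, by simpa using hle, by simpa using heven,
        Or.inr (by simpa using hreg)⟩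
    push_neg at hbig
    set S := Finset.univ.filter (fun v => mdeg L v < k) with hS
    have hsum := sum_mdeg L hloop
    have hScard : 1 < S.card := by
      by_contra hc
      push_neg at hc
      have hfull : ∀ v ∈ Finset.univ \ S, mdeg L v = k := by
        intro v hv
        simp only [hS, Finset.mem_sdiff, Finset.mem_univ, Finset.mem_filter,
          true_and, not_lt] at hv
        exact le_antisymm (hle v) hv
      have h1 : ∑ v ∈ Finset.univ \ S, mdeg L v = (Fintype.card V - S.card) * k := by
        rw [Finset.sum_congr rfl hfull, Finset.sum_const, smul_eq_mul,
          Finset.card_sdiff_of_subset (Finset.subset_univ S), Finset.card_univ]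
      have h2 : ∑ v ∈ Finset.univ \ S, mdeg L v ≤ ∑ v, mdeg L v :=
        Finset.sum_le_sum_of_subset (Finset.sdiff_subset)
      have h3 : 3 ≤ Fintype.card V - S.card := by omega
      have h4 : 3 * k ≤ (Fintype.card V - S.card) * k :=
        Nat.mul_le_mul_right k h3
      omega
    obtain ⟨u, hu, w, hw, huw⟩ := Finset.one_lt_card.mp hScard
    simp only [hS, Finset.mem_filter, Finset.mem_univ, true_and] at hu hw
    have huk : mdeg L u + 2 ≤ k := by
      rcases heven u with ⟨c, hc⟩; rcases hk with ⟨a, ha⟩; omega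
    have hwk : mdeg L w + 2 ≤ k := by
      rcases heven w with ⟨c, hc⟩; rcases hk with ⟨a, ha⟩; omega
    set L₁ := L ++ [(u, w), (u, w)] with hL₁
    have hmd : ∀ v, mdeg L₁ v = mdeg L v +
        (if u = v ∨ w = v then 1 else 0) + (if u = v ∨ w = v then 1 else 0) := by
      intro v
      rw [hL₁, mdeg_append, mdeg_cons, mdeg_cons]
      dsimp only
      have h0 : mdeg ([] : List (V × V)) v = 0 := rfl
      omega
    have hloop₁ : ∀ p ∈ L₁, p.1 ≠ p.2 := by
      intro p hp
      rcases List.mem_append.mp hp with h | h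
      · exact hloop p h
      · simp at h; subst h; exact huw
    have hle₁ : ∀ v, mdeg L₁ v ≤ k := by
      intro v
      rw [hmd v]
      split
      · rename_i h
        rcases h with h | h
        · have h' : mdeg L v = mdeg L u := by rw [h]
          omega
        · have h' : mdeg L v = mdeg L w := by rw [h]
          omega
      · simpa using hle v
    have heven₁ : ∀ v, Even (mdeg L₁ v) := by
      intro v
      rw [hmd v]
      rcases heven v with ⟨c, hc⟩
      split
      · exact ⟨c + 1, by omega⟩
      · exact ⟨c, by omega⟩
    have hlen₁ : L₁.length = L.length + 2 := by simp [hL₁]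
    obtain ⟨F', h1, h2, h3, h4⟩ := ih L₁ (by omega) hloop₁ hle₁ heven₁
    have heq : L ++ ((u, w) :: (u, w) :: F') = L₁ ++ F' := by simp [hL₁]
    exact ⟨(u, w) :: (u, w) :: F', heq ▸ h1, heq ▸ h2, heq ▸ h3, heq ▸ h4⟩

lemma lift_to_regular {V : Type*} [Fintype V] [DecidableEq V] (k : ℕ) (hk : Even k) :
    ∀ N : ℕ, ∀ L : List (V × V), Fintype.card V * k - 2 * L.length ≤ N →
    (∀ p ∈ L, p.1 ≠ p.2) → (∀ v, mdeg L v ≤ k) → (∀ v, Even (mdeg L v)) →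
    k < L.length →
    ∃ L', Relation.ReflTransGen Lift L L' ∧ (∀ v, mdeg L' v = k) ∧
      (Resolvable L' → Resolvable L) := by
  intro N
  induction N with
  | zero =>
    intro L hN hloop hle heven _
    refine ⟨L, Relation.ReflTransGen.refl, fun v => ?_, id⟩
    have hsum := sum_mdeg L hloop
    by_contra hv
    have hlt : mdeg L v < k := lt_of_le_of_ne (hle v) hv
    have : ∑ u, mdeg L u < ∑ _u : V, k := by
      apply Finset.sum_lt_sum (fun u _ => hle u) ⟨v, Finset.mem_univ v, hlt⟩
    simp only [Finset.sum_const, Finset.card_univ, smul_eq_mul] at this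
    omega
  | succ N ih =>
    intro L hN hloop hle heven hlen
    by_cases hreg : ∀ v, mdeg L v = k
    · exact ⟨L, Relation.ReflTransGen.refl, hreg, id⟩
    push_neg at hreg
    obtain ⟨v, hv⟩ := hreg
    have hvlt : mdeg L v < k := lt_of_le_of_ne (hle v) hv
    have hvle : mdeg L v + 2 ≤ k := by
      rcases hk with ⟨a, ha⟩; rcases heven v with ⟨b, hb⟩; omega
    -- find an edge not incident to v
    have hexists : ∃ p ∈ L, ¬(p.1 = v ∨ p.2 = v) := by
      by_contra hall
      push_neg at hall
      have : L.filter (fun p => p.1 = v ∨ p.2 = v) = L :=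
        List.filter_eq_self.mpr (by simpa using hall)
      have : mdeg L v = L.length := by rw [mdeg, this]
      omega
    obtain ⟨p, hp, hpv⟩ := hexists
    push_neg at hpv
    obtain ⟨hpv1, hpv2⟩ := hpv
    obtain ⟨l₁, l₂, -, hL, hE⟩ := List.exists_erase_eq hp
    set L' : List (V × V) := (p.1, v) :: (v, p.2) :: L.erase p with hL'
    have hlift : Lift L L' := ⟨p, hp, v, Ne.symm hpv1, Ne.symm hpv2, rfl⟩
    have hmdeg : ∀ u, mdeg L' u = mdeg L u + (if u = v then 2 else 0) := by
      intro u
      have h12 : p.1 ≠ p.2 := hloop p hp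
      rw [hL', hE, mdeg_cons, mdeg_cons, mdeg_append, hL, mdeg_append,
        mdeg_cons]
      by_cases huv : u = v
      · subst huv
        rw [if_pos (Or.inr rfl), if_pos (Or.inl rfl), if_neg (by tauto), if_pos rfl]
        ring
      · rw [if_neg huv]
        have e1 : (p.1 = u ∨ v = u) ↔ p.1 = u := or_iff_left (fun h => huv h.symm)
        have e2 : (v = u ∨ p.2 = u) ↔ p.2 = u := or_iff_right (fun h => huv h.symm)
        rw [if_congr e1 rfl rfl, if_congr e2 rfl rfl]
        by_cases h1 : p.1 = u <;> by_cases h2 : p.2 = u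
        · exact absurd (h1.trans h2.symm) h12
        · rw [if_pos h1, if_neg h2, if_pos (Or.inl h1)]; ring
        · rw [if_neg h1, if_pos h2, if_pos (Or.inr h2)]; ring
        · rw [if_neg h1, if_neg h2, if_neg (by tauto)]; ring
    have hlen' : L'.length = L.length + 1 := by
      rw [hL', hE]
      have : L.length = l₁.length + l₂.length + 1 := by rw [hL]; simp; omega
      simp; omega
    have hloop' : ∀ q ∈ L', q.1 ≠ q.2 := by
      intro q hq
      rw [hL'] at hq
      simp only [List.mem_cons] at hq
      rcases hq with rfl | rfl | hq
      · exact hpv1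
      · exact fun h => hpv2 h.symm
      · exact hloop q (List.erase_sublist.mem hq)
    have hres : Resolvable L' → Resolvable L := by
      intro h
      rw [hL', hE] at h
      have := resolvable_unlift p.1 v p.2 (l₁ ++ l₂) h
      rw [hL]
      simpa using resolvable_insert_middle (p.1, p.2) l₁ l₂ this
    obtain ⟨L'', hsteps, hreg'', hres''⟩ := ih L' (by omega)
      hloop'
      (fun u => by
        rw [hmdeg u]
        by_cases h : u = v
        · rw [if_pos h]; subst h; omega
        · rw [if_neg h]; simpa using hle u)
      (fun u => by rw [hmdeg u]; split <;>
        [exact (heven u).add (by norm_num); simpa using heven u])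
      (by omega)
    exact ⟨L'', Relation.ReflTransGen.head hlift hsteps, hreg'',
      fun h => hres (hres'' h)⟩

/-- A non-regular demand multigraph `D` on `n ≥ 24` vertices with `Δ(D) ≤ 2⌊n/6⌋ - 4`
can be transformed — possibly after first adding parallel edges (obtaining `Dplus ⊇ D`)
and then repeatedly lifting edges — into a `(2⌊n/6⌋ - 4)`-regular demand multigraph
`D'` on the same vertex set, such that any resolution of `D'` in `Kₙ` yields a
resolution of `D`. -/
theorem regularize_demand_graph {V : Type*} [Fintype V] [DecidableEq V]
    (hn : 24 ≤ Fintype.card V)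
    (D : List (V × V)) (hloop : ∀ p ∈ D, p.1 ≠ p.2)
    (hΔ : ∀ v, mdeg D v ≤ 2 * (Fintype.card V / 6) - 4)
    (hirr : ¬ ∀ v, mdeg D v = 2 * (Fintype.card V / 6) - 4) :
    ∃ Dplus D' : List (V × V),
      (∀ p ∈ Dplus, p.1 ≠ p.2) ∧
      ((↑(D.map (fun p => s(p.1, p.2))) : Multiset (Sym2 V)) ≤
        ↑(Dplus.map (fun p => s(p.1, p.2)))) ∧
      Relation.ReflTransGen Lift Dplus D' ∧
      (∀ v, mdeg D' v = 2 * (Fintype.card V / 6) - 4) ∧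
      (Resolvable D' → Resolvable D) := by
  set n := Fintype.card V with hn'
  set k := 2 * (n / 6) - 4 with hk'
  have hk4 : 4 ≤ k := by omega
  have hk : Even k := ⟨n / 6 - 2, by omega⟩
  have hmult : ∀ F : List (V × V),
      (↑(D.map (fun p => s(p.1, p.2))) : Multiset (Sym2 V)) ≤
        ↑((D ++ F).map (fun p => s(p.1, p.2))) := by
    intro F
    rw [List.map_append, ← Multiset.coe_add]
    exact Multiset.le_add_right _ _
  obtain ⟨F₁, hloop₁, hle₁, heven₁⟩ := fix_parity k hk _ D le_rfl hloop hΔ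
  obtain ⟨F₂, hloop₂, hle₂, heven₂, hcase⟩ :=
    pad_edges k hk (by omega) (by omega) _ (D ++ F₁) le_rfl hloop₁ hle₁ heven₁
  rcases hcase with hbig | hreg
  · obtain ⟨L', hsteps, hreg', hres⟩ := lift_to_regular k hk _ (D ++ F₁ ++ F₂)
      le_rfl hloop₂ hle₂ heven₂ hbig
    refine ⟨D ++ F₁ ++ F₂, L', hloop₂, ?_, hsteps, hreg', ?_⟩
    · rw [List.append_assoc]; exact hmult _
    · intro h
      have := hres h
      rw [List.append_assoc] at this
      exact resolvable_prefix _ _ this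
  · refine ⟨D ++ F₁ ++ F₂, D ++ F₁ ++ F₂, hloop₂, ?_, Relation.ReflTransGen.refl,
      hreg, ?_⟩
    · rw [List.append_assoc]; exact hmult _
    · intro h
      rw [List.append_assoc] at h
      exact resolvable_prefix _ _ h
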